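/- Fix c₁, c₂ ∈ ℂ. Let g, v, G, V ∈ C∞₂π(ℝ²,ℂ) satisfy G_x = g_y, V_x = v_y and ∫₀^{2π} G(x,y) dx = ∫₀^{2π} V(x,y) dx = 0 for every y (so G = ∂_x^{−1}g_y and V = ∂_x^{−1}v_y). Then: (i) for all a, b, A ∈ C∞₂π(ℝ²,ℂ) with A_x = a_y and ∫₀^{2π} A dx = 0, one has d/dε|_{ε=0} ∫₀^{2π}∫₀^{2π} [ (v+εb)²/2 + (v+εb)·(G+εA) ] dx dy = ∫₀^{2π}∫₀^{2π} [ b·(v+G) + a·V ] dx dy, i.e. the variational gradient of the Hamiltonian H(g,v) = ∫∫ (v²/2 + v·∂_x^{−1}g_y) dx dy is (δH/δv, δH/δg) = (v+G, V); (ii) the coadjoint action of (v+G, V) on (g,v) is âd*_{(v+G,V)}(g,v) = ( v·g_x − v_x·g − g_y·g + g_x·G + c₂·v_y + c₂·G_y , 3·v_x·v + c₁·v_{xxx} + c₂·V_y + 2·v·g_y − v_y·g + v_x·G − 2·g_x·V + c₁·g_{xxy} ). Hence the Euler equation on ĝ* associated with H is the generalized Kadomtsev–Petviashvili system g_t = v·g_x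 − v_x·g − g_y·g + g_x·∂_x^{−1}g_y + c₂·v_y + c₂·∂_x^{−1}g_{yy}, v_t = 3·v_x·v + c₁·v_{xxx} + c₂·∂_x^{−1}v_{yy} + 2·v·g_y − v_y·g + v_x·∂_x^{−1}g_y − 2·g_x·∂_x^{−1}v_y + c₁·g_{xxy}. -/

import Mathlib

open Real intervalIntegral
open scoped ContDiff

noncomputable section

/-- Functions on `ℝ²` (representing functions on the 2-torus `S¹ × S¹`). -/
abbrev F2 : Type := ℝ × ℝ → ℂ

/-- `C∞₂π(ℝ²,ℂ)`: smooth functions `ℝ² → ℂ` which are `2π`-periodic in each variable. -/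
def SmoothPer2 (f : F2) : Prop :=
  ContDiff ℝ ∞ f ∧ (∀ p : ℝ × ℝ, f (p.1 + 2 * π, p.2) = f p)
    ∧ (∀ p : ℝ × ℝ, f (p.1, p.2 + 2 * π) = f p)

/-- Partial derivative in the first variable `x`. -/
def pdx (f : F2) : F2 := fun p => deriv (fun t => f (t, p.2)) p.1

/-- Partial derivative in the second variable `y`. -/
def pdy (f : F2) : F2 := fun p => deriv (fun t => f (p.1, t)) p.2

/-- Double integral `∫₀^{2π}∫₀^{2π} f dx dy` over the torus. -/
def integ2 (f : F2) : ℂ := ∫ y in (0:ℝ)..(2 * π), ∫ x in (0:ℝ)..(2 * π), f (x, y)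

/-- Membership in the looped cotangent Virasoro algebra `g̃`: a pair `(f,u)` of
functions in `C∞₂π(ℝ²,ℂ)`, `f` representing the loop of vector fields `f(x,y)·∂/∂x`
and `u` the loop of quadratic differentials `u(x,y)·dx²`. -/
def MemG (a : F2 × F2) : Prop := SmoothPer2 a.1 ∧ SmoothPer2 a.2

/-- The Lie bracket of the looped cotangent Virasoro algebra `g̃ = L(Vect(S¹) ⋉ F₂)`:
`[(f,u),(g,v)] = (f·g_x − f_x·g, f·v_x + 2·f_x·v − g·u_x − 2·g_x·u)`. -/
def gBracket (a b : F2 × F2) : F2 × F2 :=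
  (fun p => a.1 p * pdx b.1 p - pdx a.1 p * b.1 p,
   fun p => a.1 p * pdx b.2 p + 2 * pdx a.1 p * b.2 p
     - b.1 p * pdx a.2 p - 2 * pdx b.1 p * a.2 p)

/-- The coadjoint action of the centrally extended algebra `ĝ` with central charges
`(c₁,c₂)`: `âd*_{(f,u)}(g,v) = (f·g_x − f_x·g + c₂·f_y,
f·v_x + 2·f_x·v − u_x·g − 2·u·g_x + c₁·f_{xxx} + c₂·u_y)`. -/
def hatAd (c₁ c₂ : ℂ) (f u g v : F2) : F2 × F2 :=
  (fun p => f p * pdx g p - pdx f p * g p + c₂ * pdy f p,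
   fun p => f p * pdx v p + 2 * pdx f p * v p - pdx u p * g p - 2 * u p * pdx g p
     + c₁ * pdx (pdx (pdx f)) p + c₂ * pdy u p)

/-! ### Auxiliary lemmas -/

section Aux

open MeasureTheory

lemma sliceX_contDiff {f : F2} (hf : ContDiff ℝ ∞ f) (y : ℝ) :
    ContDiff ℝ ∞ (fun t : ℝ => f (t, y)) :=
  hf.comp (contDiff_id.prodMk contDiff_const)

lemma sliceY_contDiff {f : F2} (hf : ContDiff ℝ ∞ f) (x : ℝ) :
    ContDiff ℝ ∞ (fun t : ℝ => f (x, t)) :=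
  hf.comp (contDiff_const.prodMk contDiff_id)

lemma contSliceX {f : F2} (hf : Continuous f) (y : ℝ) : Continuous (fun t : ℝ => f (t, y)) :=
  hf.comp (continuous_id.prodMk continuous_const)

lemma contSliceY {f : F2} (hf : Continuous f) (x : ℝ) : Continuous (fun t : ℝ => f (x, t)) :=
  hf.comp (continuous_const.prodMk continuous_id)

lemma hasDerivAt_pdx {f : F2} (hf : ContDiff ℝ ∞ f) (p : ℝ × ℝ) :
    HasDerivAt (fun t => f (t, p.2)) (pdx f p) p.1 :=
  (((sliceX_contDiff hf p.2).differentiable (by simp)) p.1).hasDerivAt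

lemma hasDerivAt_pdy {f : F2} (hf : ContDiff ℝ ∞ f) (p : ℝ × ℝ) :
    HasDerivAt (fun t => f (p.1, t)) (pdy f p) p.2 :=
  (((sliceY_contDiff hf p.1).differentiable (by simp)) p.2).hasDerivAt

lemma pdx_eq_fderiv {f : F2} (hf : ContDiff ℝ ∞ f) (p : ℝ × ℝ) :
    pdx f p = fderiv ℝ f p (1, 0) := by
  have h1 : HasDerivAt (fun t : ℝ => (t, p.2)) ((1:ℝ), (0:ℝ)) p.1 :=
    (hasDerivAt_id p.1).prodMk (hasDerivAt_const p.1 p.2)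
  have h2 : HasFDerivAt f (fderiv ℝ f p) p :=
    ((hf.differentiable (by simp)) p).hasFDerivAt
  have h3 : HasDerivAt (fun t => f (t, p.2)) (fderiv ℝ f p (1, 0)) p.1 := by
    have := h2.comp_hasDerivAt p.1 (by simpa using h1)
    exact this
  exact h3.deriv.symm ▸ rfl

lemma pdy_eq_fderiv {f : F2} (hf : ContDiff ℝ ∞ f) (p : ℝ × ℝ) :
    pdy f p = fderiv ℝ f p (0, 1) := by
  have h1 : HasDerivAt (fun t : ℝ => (p.1, t)) ((0:ℝ), (1:ℝ)) p.2 :=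
    (hasDerivAt_const p.2 p.1).prodMk (hasDerivAt_id p.2)
  have h2 : HasFDerivAt f (fderiv ℝ f p) p :=
    ((hf.differentiable (by simp)) p).hasFDerivAt
  have h3 : HasDerivAt (fun t => f (p.1, t)) (fderiv ℝ f p (0, 1)) p.2 := by
    have := h2.comp_hasDerivAt p.2 (by simpa using h1)
    exact this
  exact h3.deriv.symm ▸ rfl

lemma contDiff_pdx {f : F2} (hf : ContDiff ℝ ∞ f) : ContDiff ℝ ∞ (pdx f) := by
  have : pdx f = fun p => fderiv ℝ f p (1, 0) := funext (pdx_eq_fderiv hf)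
  rw [this]
  exact (hf.fderiv_right (by simp)).clm_apply contDiff_const

lemma contDiff_pdy {f : F2} (hf : ContDiff ℝ ∞ f) : ContDiff ℝ ∞ (pdy f) := by
  have : pdy f = fun p => fderiv ℝ f p (0, 1) := funext (pdy_eq_fderiv hf)
  rw [this]
  exact (hf.fderiv_right (by simp)).clm_apply contDiff_const

lemma pdx_add {f g : F2} (hf : ContDiff ℝ ∞ f) (hg : ContDiff ℝ ∞ g) (p : ℝ × ℝ) :
    pdx (fun q => f q + g q) p = pdx f p + pdx g p :=
  ((hasDerivAt_pdx hf p).add (hasDerivAt_pdx hg p)).deriv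

lemma pdy_add {f g : F2} (hf : ContDiff ℝ ∞ f) (hg : ContDiff ℝ ∞ g) (p : ℝ × ℝ) :
    pdy (fun q => f q + g q) p = pdy f p + pdy g p :=
  ((hasDerivAt_pdy hf p).add (hasDerivAt_pdy hg p)).deriv

/-- FTC in the x-variable. -/
lemma integ_pdx {f : F2} (hf : ContDiff ℝ ∞ f) (y x₁ x₂ : ℝ) :
    (∫ s in x₁..x₂, pdx f (s, y)) = f (x₂, y) - f (x₁, y) := by
  have : (fun s => pdx f (s, y)) = deriv (fun t => f (t, y)) := rfl
  rw [this]
  exact integral_deriv_eq_sub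
    (fun t _ => ((sliceX_contDiff hf y).differentiable (by simp)).differentiableAt)
    (((sliceX_contDiff hf y).continuous_deriv (by exact_mod_cast le_top)).intervalIntegrable _ _)

/-- FTC in the y-variable. -/
lemma integ_pdy {f : F2} (hf : ContDiff ℝ ∞ f) (x y₁ y₂ : ℝ) :
    (∫ t in y₁..y₂, pdy f (x, t)) = f (x, y₂) - f (x, y₁) := by
  have : (fun t => pdy f (x, t)) = deriv (fun t => f (x, t)) := rfl
  rw [this]
  exact integral_deriv_eq_sub
    (fun t _ => ((sliceY_contDiff hf x).differentiable (by simp)).differentiableAt)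
    (((sliceY_contDiff hf x).continuous_deriv (by exact_mod_cast le_top)).intervalIntegrable _ _)

/-- Fubini for continuous functions, interval-integral version. -/
lemma fubini_cont {f : F2} (hf : Continuous f) (a b c d : ℝ) :
    (∫ y in c..d, ∫ x in a..b, f (x, y)) = ∫ x in a..b, ∫ y in c..d, f (x, y) := by
  have core : ∀ a b c d : ℝ, a ≤ b → c ≤ d →
      (∫ y in c..d, ∫ x in a..b, f (x, y)) = ∫ x in a..b, ∫ y in c..d, f (x, y) := by
    intro a b c d hab hcd
    rw [intervalIntegral.integral_of_le hab, intervalIntegral.integral_of_le hcd]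
    simp_rw [intervalIntegral.integral_of_le hab, intervalIntegral.integral_of_le hcd]
    have hint : Integrable (Function.uncurry fun (y x : ℝ) => f (x, y))
        ((volume.restrict (Set.Ioc c d)).prod (volume.restrict (Set.Ioc a b))) := by
      rw [Measure.prod_restrict]
      have h1 : IntegrableOn (Function.uncurry fun (y x : ℝ) => f (x, y))
          (Set.Icc c d ×ˢ Set.Icc a b) (volume.prod volume) := by
        rw [← Measure.volume_eq_prod]
        apply (hf.comp continuous_swap).continuousOn.integrableOn_compact
        exact isCompact_Icc.prod isCompact_Icc
      rw [← Measure.volume_eq_prod]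
      rw [← Measure.volume_eq_prod] at h1
      exact h1.mono_set (Set.prod_mono Set.Ioc_subset_Icc_self Set.Ioc_subset_Icc_self)
    exact MeasureTheory.integral_integral_swap hint
  rcases le_total a b with hab | hab <;> rcases le_total c d with hcd | hcd
  · exact core a b c d hab hcd
  · calc (∫ y in c..d, ∫ x in a..b, f (x, y))
        = -(∫ y in d..c, ∫ x in a..b, f (x, y)) := intervalIntegral.integral_symm d c
      _ = -(∫ x in a..b, ∫ y in d..c, f (x, y)) := by rw [core a b d c hab hcd]
      _ = ∫ x in a..b, -(∫ y in d..c, f (x, y)) := (intervalIntegral.integral_neg).symm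
      _ = ∫ x in a..b, ∫ y in c..d, f (x, y) :=
          intervalIntegral.integral_congr fun x _ => (intervalIntegral.integral_symm d c).symm
  · calc (∫ y in c..d, ∫ x in a..b, f (x, y))
        = ∫ y in c..d, -(∫ x in b..a, f (x, y)) :=
          intervalIntegral.integral_congr fun y _ => intervalIntegral.integral_symm b a
      _ = -(∫ y in c..d, ∫ x in b..a, f (x, y)) := intervalIntegral.integral_neg
      _ = -(∫ x in b..a, ∫ y in c..d, f (x, y)) := by rw [core b a c d hab hcd]
      _ = ∫ x in a..b, ∫ y in c..d, f (x, y) := (intervalIntegral.integral_symm b a).symm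
  · calc (∫ y in c..d, ∫ x in a..b, f (x, y))
        = -(∫ y in d..c, ∫ x in a..b, f (x, y)) := intervalIntegral.integral_symm d c
      _ = -(∫ y in d..c, -(∫ x in b..a, f (x, y))) := by
          rw [intervalIntegral.integral_congr (g := fun y => -(∫ x in b..a, f (x, y)))
            fun y _ => intervalIntegral.integral_symm b a]
      _ = ∫ y in d..c, ∫ x in b..a, f (x, y) := by rw [intervalIntegral.integral_neg, neg_neg]
      _ = ∫ x in b..a, ∫ y in d..c, f (x, y) := core b a d c hab hcd
      _ = ∫ x in b..a, -(∫ y in c..d, f (x, y)) :=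
          intervalIntegral.integral_congr fun x _ => intervalIntegral.integral_symm c d
      _ = -(∫ x in b..a, ∫ y in c..d, f (x, y)) := intervalIntegral.integral_neg
      _ = ∫ x in a..b, ∫ y in c..d, f (x, y) := (intervalIntegral.integral_symm b a).symm

/-- Joint continuity of the primitive in the x-variable. -/
lemma contPrim {v : ℝ × ℝ → ℂ} (hv : Continuous v) :
    Continuous (fun p : ℝ × ℝ => ∫ s in (0:ℝ)..p.1, v (s, p.2)) := by fun_prop

/-- Continuity of a parametric interval integral. -/
lemma contParamInt {F : ℝ × ℝ → ℂ} (hF : Continuous F) (a b : ℝ) :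
    Continuous (fun y => ∫ x in a..b, F (x, y)) := by fun_prop

lemma contParamInt2 {F : ℝ × ℝ → ℂ} (hF : Continuous F) (a b : ℝ) :
    Continuous (fun x => ∫ y in a..b, F (x, y)) := by fun_prop

lemma integ2_congr {f g : F2} (h : ∀ p, f p = g p) : integ2 f = integ2 g :=
  congrArg _ (funext h)

lemma integ2_add {f g : F2} (hf : Continuous f) (hg : Continuous g) :
    integ2 (fun p => f p + g p) = integ2 f + integ2 g := by
  unfold integ2
  have h1 : ∀ y : ℝ, (∫ x in (0:ℝ)..(2*π), (f (x, y) + g (x, y)))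
      = (∫ x in (0:ℝ)..(2*π), f (x, y)) + ∫ x in (0:ℝ)..(2*π), g (x, y) := fun y =>
    intervalIntegral.integral_add ((contSliceX hf y).intervalIntegrable _ _)
      ((contSliceX hg y).intervalIntegrable _ _)
  rw [intervalIntegral.integral_congr (g := fun y => (∫ x in (0:ℝ)..(2*π), f (x, y))
      + ∫ x in (0:ℝ)..(2*π), g (x, y)) (fun y _ => h1 y)]
  exact intervalIntegral.integral_add ((contParamInt hf 0 (2*π)).intervalIntegrable _ _)
    ((contParamInt hg 0 (2*π)).intervalIntegrable _ _)

lemma integ2_const_mul (c : ℂ) (f : F2) :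
    integ2 (fun p => c * f p) = c * integ2 f := by
  unfold integ2
  simp_rw [intervalIntegral.integral_const_mul]

end Aux

section Pair

variable {u U : F2}

/-- The x-mean of `u` over a period is independent of `y`. -/
lemma mean_const (hu : SmoothPer2 u) (hU : SmoothPer2 U) (hUx : ∀ p, pdx U p = pdy u p)
    (y : ℝ) : (∫ s in (0:ℝ)..(2 * π), u (s, y)) = ∫ s in (0:ℝ)..(2 * π), u (s, 0) := by
  have key : (∫ s in (0:ℝ)..(2 * π), (u (s, y) - u (s, 0))) = 0 := by
    have h1 : ∀ s : ℝ, u (s, y) - u (s, 0) = ∫ t in (0:ℝ)..y, pdx U (s, t) := by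
      intro s
      rw [intervalIntegral.integral_congr (f := fun t => pdx U (s, t))
        (g := fun t => pdy u (s, t)) (fun t _ => hUx (s, t))]
      exact (integ_pdy hu.1 s 0 y).symm
    rw [intervalIntegral.integral_congr (f := fun s => u (s, y) - u (s, 0))
      (g := fun s => ∫ t in (0:ℝ)..y, pdx U (s, t)) (fun s _ => h1 s)]
    rw [← fubini_cont (contDiff_pdx hU.1).continuous 0 (2 * π) 0 y]
    have h2 : ∀ t : ℝ, (∫ s in (0:ℝ)..(2 * π), pdx U (s, t)) = 0 := by
      intro t
      rw [integ_pdx hU.1 t 0 (2 * π)]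
      have := hU.2.1 (0, t)
      simp only [zero_add] at this
      rw [this, sub_self]
    rw [intervalIntegral.integral_congr (f := fun t => ∫ s in (0:ℝ)..(2 * π), pdx U (s, t))
      (g := fun _ => (0:ℂ)) (fun t _ => h2 t)]
    simp
  have h3 := intervalIntegral.integral_sub
    ((contSliceX hu.1.continuous y).intervalIntegrable (μ := MeasureTheory.volume) (0:ℝ) (2 * π))
    ((contSliceX hu.1.continuous 0).intervalIntegrable (μ := MeasureTheory.volume) (0:ℝ) (2 * π))
  exact sub_eq_zero.mp (h3.symm.trans key)

/-- The primitive `∫₀ˣ u` as a function of `y`. -/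
lemma prim_formula (hu : SmoothPer2 u) (hU : SmoothPer2 U) (hUx : ∀ p, pdx U p = pdy u p)
    (x y : ℝ) : (∫ s in (0:ℝ)..x, u (s, y))
      = (∫ s in (0:ℝ)..x, u (s, 0)) + ∫ t in (0:ℝ)..y, (U (x, t) - U (0, t)) := by
  have key : (∫ s in (0:ℝ)..x, (u (s, y) - u (s, 0)))
      = ∫ t in (0:ℝ)..y, (U (x, t) - U (0, t)) := by
    have h1 : ∀ s : ℝ, u (s, y) - u (s, 0) = ∫ t in (0:ℝ)..y, pdx U (s, t) := by
      intro s
      rw [intervalIntegral.integral_congr (f := fun t => pdx U (s, t))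
        (g := fun t => pdy u (s, t)) (fun t _ => hUx (s, t))]
      exact (integ_pdy hu.1 s 0 y).symm
    rw [intervalIntegral.integral_congr (f := fun s => u (s, y) - u (s, 0))
      (g := fun s => ∫ t in (0:ℝ)..y, pdx U (s, t)) (fun s _ => h1 s)]
    rw [← fubini_cont (contDiff_pdx hU.1).continuous 0 x 0 y]
    exact intervalIntegral.integral_congr fun t _ => integ_pdx hU.1 t 0 x
  have h3 := intervalIntegral.integral_sub
    ((contSliceX hu.1.continuous y).intervalIntegrable (μ := MeasureTheory.volume) (0:ℝ) x)
    ((contSliceX hu.1.continuous 0).intervalIntegrable (μ := MeasureTheory.volume) (0:ℝ) x)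
  exact sub_eq_iff_eq_add'.mp (h3.symm.trans key)

/-- y-derivative of the primitive `∫₀ˣ u`. -/
lemma prim_hasDerivAt (hu : SmoothPer2 u) (hU : SmoothPer2 U) (hUx : ∀ p, pdx U p = pdy u p)
    (x y : ℝ) :
    HasDerivAt (fun t => ∫ s in (0:ℝ)..x, u (s, t)) (U (x, y) - U (0, y)) y := by
  have hfun : (fun t => ∫ s in (0:ℝ)..x, u (s, t))
      = fun t => (∫ s in (0:ℝ)..x, u (s, 0)) + ∫ r in (0:ℝ)..t, (U (x, r) - U (0, r)) :=
    funext fun t => prim_formula hu hU hUx x t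
  rw [hfun]
  have hc : Continuous fun r : ℝ => U (x, r) - U (0, r) :=
    (contSliceY hU.1.continuous x).sub (contSliceY hU.1.continuous 0)
  exact ((hc.integral_hasStrictDerivAt 0 y).hasDerivAt).const_add _

/-- `∫₀^{2π} U(0,y) dy = 0` when `U` has zero x-mean. -/
lemma int_left_zero (hu : SmoothPer2 u) (hU : SmoothPer2 U) (hUx : ∀ p, pdx U p = pdy u p)
    (hU0 : ∀ y : ℝ, (∫ x in (0:ℝ)..(2 * π), U (x, y)) = 0) :
    (∫ y in (0:ℝ)..(2 * π), U (0, y)) = 0 := by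
  have h1 : ∀ x : ℝ, (∫ y in (0:ℝ)..(2 * π), U (x, y)) = ∫ y in (0:ℝ)..(2 * π), U (0, y) := by
    intro x
    have key : (∫ y in (0:ℝ)..(2 * π), (U (x, y) - U (0, y))) = 0 := by
      have h2 : ∀ y : ℝ, U (x, y) - U (0, y) = ∫ s in (0:ℝ)..x, pdx U (s, y) :=
        fun y => (integ_pdx hU.1 y 0 x).symm
      rw [intervalIntegral.integral_congr (f := fun y => U (x, y) - U (0, y))
        (g := fun y => ∫ s in (0:ℝ)..x, pdx U (s, y)) (fun y _ => h2 y)]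
      rw [fubini_cont (contDiff_pdx hU.1).continuous 0 x 0 (2 * π)]
      have h4 : ∀ s : ℝ, (∫ y in (0:ℝ)..(2 * π), pdx U (s, y)) = 0 := by
        intro s
        rw [intervalIntegral.integral_congr (f := fun y => pdx U (s, y))
          (g := fun y => pdy u (s, y)) (fun y _ => hUx (s, y)), integ_pdy hu.1 s 0 (2 * π)]
        have := hu.2.2 (s, 0)
        simp only [zero_add] at this
        rw [this, sub_self]
      rw [intervalIntegral.integral_congr (f := fun s => ∫ y in (0:ℝ)..(2 * π), pdx U (s, y))
        (g := fun _ => (0:ℂ)) (fun s _ => h4 s)]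
      simp
    have h3 := intervalIntegral.integral_sub
      ((contSliceY hU.1.continuous x).intervalIntegrable (μ := MeasureTheory.volume) (0:ℝ) (2 * π))
      ((contSliceY hU.1.continuous 0).intervalIntegrable (μ := MeasureTheory.volume) (0:ℝ) (2 * π))
    exact sub_eq_zero.mp (h3.symm.trans key)
  have h5 : (∫ x in (0:ℝ)..(2 * π), ∫ y in (0:ℝ)..(2 * π), U (x, y))
      = (2 * π - 0) • ∫ y in (0:ℝ)..(2 * π), U (0, y) := by
    rw [intervalIntegral.integral_congr (f := fun x => ∫ y in (0:ℝ)..(2 * π), U (x, y))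
      (g := fun _ => ∫ y in (0:ℝ)..(2 * π), U (0, y)) (fun x _ => h1 x)]
    exact intervalIntegral.integral_const _
  have h6 : (∫ x in (0:ℝ)..(2 * π), ∫ y in (0:ℝ)..(2 * π), U (x, y)) = 0 := by
    rw [← fubini_cont hU.1.continuous 0 (2 * π) 0 (2 * π)]
    rw [intervalIntegral.integral_congr (f := fun y => ∫ x in (0:ℝ)..(2 * π), U (x, y))
      (g := fun _ => (0:ℂ)) (fun y _ => hU0 y)]
    simp
  have h7 := h5.symm.trans h6
  simp only [sub_zero] at h7
  rcases smul_eq_zero.mp h7 with h | h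
  · exact absurd h (by positivity)
  · exact h

end Pair

/-- Self-adjointness of `∂ₓ⁻¹∂_y`: `∫∫ v·A = ∫∫ a·V`. -/
lemma pairing {v V a A : F2} (hv : SmoothPer2 v) (hV : SmoothPer2 V)
    (hVx : ∀ p, pdx V p = pdy v p)
    (hV0 : ∀ y : ℝ, (∫ x in (0:ℝ)..(2 * π), V (x, y)) = 0)
    (ha : SmoothPer2 a) (hA : SmoothPer2 A)
    (hAx : ∀ p, pdx A p = pdy a p)
    (hA0 : ∀ y : ℝ, (∫ x in (0:ℝ)..(2 * π), A (x, y)) = 0) :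
    integ2 (fun p => v p * A p) = integ2 (fun p => a p * V p) := by
  have cv := hv.1.continuous
  have cV := hV.1.continuous
  have ca := ha.1.continuous
  have cA := hA.1.continuous
  have cP : Continuous (fun p : ℝ × ℝ => ∫ s in (0:ℝ)..p.1, v (s, p.2)) := contPrim cv
  have cay : Continuous (pdy a) := (contDiff_pdy ha.1).continuous
  have cPay : Continuous (fun p : ℝ × ℝ => pdy a p * (∫ s in (0:ℝ)..p.1, v (s, p.2))) :=
    cay.mul cP
  set M : ℂ := ∫ s in (0:ℝ)..(2 * π), v (s, 0) with hM
  have stepA : ∀ y : ℝ, (∫ x in (0:ℝ)..(2 * π), v (x, y) * A (x, y))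
      = M * A (0, y)
        - ∫ x in (0:ℝ)..(2 * π), pdy a (x, y) * (∫ s in (0:ℝ)..x, v (s, y)) := by
    intro y
    have hparts := intervalIntegral.integral_mul_deriv_eq_deriv_mul
      (u := fun x => A (x, y)) (u' := fun x => pdy a (x, y))
      (v := fun x => ∫ s in (0:ℝ)..x, v (s, y)) (v' := fun x => v (x, y))
      (a := (0:ℝ)) (b := 2 * π)
      (fun x _ => by
        have h := hasDerivAt_pdx hA.1 (x, y)
        rw [hAx (x, y)] at h
        exact h)
      (fun x _ => ((contSliceX cv y).integral_hasStrictDerivAt 0 x).hasDerivAt)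
      ((contSliceX cay y).intervalIntegrable (μ := MeasureTheory.volume) (0:ℝ) (2 * π))
      ((contSliceX cv y).intervalIntegrable (μ := MeasureTheory.volume) (0:ℝ) (2 * π))
    beta_reduce at hparts
    have hb1 : A (2 * π, y) = A (0, y) := by
      have := hA.2.1 (0, y); simpa using this
    have hb2 : (∫ s in (0:ℝ)..(2 * π), v (s, y)) = M :=
      (mean_const hv hV hVx y).trans hM.symm
    have hb3 : (∫ s in (0:ℝ)..(0:ℝ), v (s, y)) = 0 := intervalIntegral.integral_same
    rw [hb1, hb2, hb3] at hparts
    rw [intervalIntegral.integral_congr (f := fun x => v (x, y) * A (x, y))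
      (g := fun x => A (x, y) * v (x, y)) (fun x _ => mul_comm _ _)]
    rw [hparts]
    ring
  have stepD : ∀ x : ℝ,
      (∫ y in (0:ℝ)..(2 * π), pdy a (x, y) * (∫ s in (0:ℝ)..x, v (s, y)))
      = -∫ y in (0:ℝ)..(2 * π), (V (x, y) - V (0, y)) * a (x, y) := by
    intro x
    have hparts := intervalIntegral.integral_mul_deriv_eq_deriv_mul
      (u := fun y => ∫ s in (0:ℝ)..x, v (s, y)) (u' := fun y => V (x, y) - V (0, y))
      (v := fun y => a (x, y)) (v' := fun y => pdy a (x, y))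
      (a := (0:ℝ)) (b := 2 * π)
      (fun y _ => prim_hasDerivAt hv hV hVx x y)
      (fun y _ => hasDerivAt_pdy ha.1 (x, y))
      (((contSliceY cV x).sub (contSliceY cV 0)).intervalIntegrable
        (μ := MeasureTheory.volume) (0:ℝ) (2 * π))
      ((contSliceY cay x).intervalIntegrable (μ := MeasureTheory.volume) (0:ℝ) (2 * π))
    beta_reduce at hparts
    have hb1 : a (x, 2 * π) = a (x, 0) := by
      have := ha.2.2 (x, 0); simpa using this
    have hb2 : (∫ s in (0:ℝ)..x, v (s, 2 * π)) = ∫ s in (0:ℝ)..x, v (s, 0) :=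
      intervalIntegral.integral_congr fun s _ => by
        have := hv.2.2 (s, 0); simpa using this
    rw [hb1, hb2] at hparts
    rw [intervalIntegral.integral_congr
      (f := fun y => pdy a (x, y) * (∫ s in (0:ℝ)..x, v (s, y)))
      (g := fun y => (∫ s in (0:ℝ)..x, v (s, y)) * pdy a (x, y)) (fun y _ => mul_comm _ _)]
    rw [hparts]
    ring
  calc integ2 (fun p => v p * A p)
      = ∫ y in (0:ℝ)..(2 * π), (M * A (0, y)
          - ∫ x in (0:ℝ)..(2 * π), pdy a (x, y) * (∫ s in (0:ℝ)..x, v (s, y))) := by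
        simp only [integ2]
        exact intervalIntegral.integral_congr fun y _ => stepA y
    _ = (∫ y in (0:ℝ)..(2 * π), M * A (0, y))
        - ∫ y in (0:ℝ)..(2 * π), ∫ x in (0:ℝ)..(2 * π),
            pdy a (x, y) * (∫ s in (0:ℝ)..x, v (s, y)) :=
        intervalIntegral.integral_sub
          ((continuous_const.mul (contSliceY cA 0)).intervalIntegrable
            (μ := MeasureTheory.volume) (0:ℝ) (2 * π))
          ((contParamInt cPay 0 (2 * π)).intervalIntegrable
            (μ := MeasureTheory.volume) (0:ℝ) (2 * π))
    _ = M * (∫ y in (0:ℝ)..(2 * π), A (0, y))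
        - ∫ x in (0:ℝ)..(2 * π), ∫ y in (0:ℝ)..(2 * π),
            pdy a (x, y) * (∫ s in (0:ℝ)..x, v (s, y)) := by
        rw [intervalIntegral.integral_const_mul, fubini_cont cPay 0 (2 * π) 0 (2 * π)]
    _ = - ∫ x in (0:ℝ)..(2 * π), ∫ y in (0:ℝ)..(2 * π),
            pdy a (x, y) * (∫ s in (0:ℝ)..x, v (s, y)) := by
        rw [int_left_zero ha hA hAx hA0, mul_zero, zero_sub]
    _ = - ∫ x in (0:ℝ)..(2 * π),
            -(∫ y in (0:ℝ)..(2 * π), (V (x, y) - V (0, y)) * a (x, y)) := by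
        rw [intervalIntegral.integral_congr
          (f := fun x => ∫ y in (0:ℝ)..(2 * π), pdy a (x, y) * (∫ s in (0:ℝ)..x, v (s, y)))
          (g := fun x => -(∫ y in (0:ℝ)..(2 * π), (V (x, y) - V (0, y)) * a (x, y)))
          (fun x _ => stepD x)]
    _ = ∫ x in (0:ℝ)..(2 * π), ∫ y in (0:ℝ)..(2 * π), (V (x, y) - V (0, y)) * a (x, y) := by
        rw [intervalIntegral.integral_neg, neg_neg]
    _ = ∫ x in (0:ℝ)..(2 * π), ((∫ y in (0:ℝ)..(2 * π), V (x, y) * a (x, y))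
          - ∫ y in (0:ℝ)..(2 * π), V (0, y) * a (x, y)) := by
        refine intervalIntegral.integral_congr fun x _ => ?_
        rw [← intervalIntegral.integral_sub (f := fun y => V (x, y) * a (x, y))
          (g := fun y => V (0, y) * a (x, y))
          (((contSliceY cV x).mul (contSliceY ca x)).intervalIntegrable
            (μ := MeasureTheory.volume) (0:ℝ) (2 * π))
          (((contSliceY cV 0).mul (contSliceY ca x)).intervalIntegrable
            (μ := MeasureTheory.volume) (0:ℝ) (2 * π))]
        exact intervalIntegral.integral_congr fun y _ => by ring
    _ = (∫ x in (0:ℝ)..(2 * π), ∫ y in (0:ℝ)..(2 * π), V (x, y) * a (x, y))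
        - ∫ x in (0:ℝ)..(2 * π), ∫ y in (0:ℝ)..(2 * π), V (0, y) * a (x, y) :=
        intervalIntegral.integral_sub
          ((contParamInt2 (cV.mul ca) 0 (2 * π)).intervalIntegrable
            (μ := MeasureTheory.volume) (0:ℝ) (2 * π))
          ((contParamInt2 (F := fun p => V (0, p.2) * a p)
              ((cV.comp (continuous_const.prodMk continuous_snd)).mul ca) 0 (2 * π)).intervalIntegrable
            (μ := MeasureTheory.volume) (0:ℝ) (2 * π))
    _ = (∫ y in (0:ℝ)..(2 * π), ∫ x in (0:ℝ)..(2 * π), V (x, y) * a (x, y)) - 0 := by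
        rw [← fubini_cont (f := fun p => V p * a p) (cV.mul ca) 0 (2 * π) 0 (2 * π)]
        congr 1
        rw [← fubini_cont (f := fun p => V (0, p.2) * a p)
          ((cV.comp (continuous_const.prodMk continuous_snd)).mul ca) 0 (2 * π) 0 (2 * π)]
        have h8 : ∀ y : ℝ, (∫ x in (0:ℝ)..(2 * π), V (0, y) * a (x, y))
            = V (0, y) * (∫ s in (0:ℝ)..(2 * π), a (s, 0)) := by
          intro y
          rw [intervalIntegral.integral_const_mul, mean_const ha hA hAx y]
        rw [intervalIntegral.integral_congr
          (f := fun y => ∫ x in (0:ℝ)..(2 * π), V (0, y) * a (x, y))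
          (g := fun y => V (0, y) * (∫ s in (0:ℝ)..(2 * π), a (s, 0))) (fun y _ => h8 y)]
        rw [intervalIntegral.integral_mul_const, int_left_zero hv hV hVx hV0, zero_mul]
    _ = integ2 (fun p => a p * V p) := by
        rw [sub_zero]
        simp only [integ2]
        exact intervalIntegral.integral_congr fun y _ =>
          intervalIntegral.integral_congr fun x _ => mul_comm _ _

/-- **The generalized Kadomtsev–Petviashvili system as an Euler equation on `ĝ*`.**
Let `G = ∂_x^{−1}g_y` and `V = ∂_x^{−1}v_y` (i.e. `G_x = g_y`, `V_x = v_y` and `G`, `V`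
have zero mean in `x`). Then:
(i) the variational gradient of `H(g,v) = ∫∫ (v²/2 + v·∂_x^{−1}g_y) dx dy` is
`(δH/δv, δH/δg) = (v + G, V)`, in the sense that for any variation `(a,b)` with
`A = ∂_x^{−1}a_y`, `d/dε|₀ ∫∫ [(v+εb)²/2 + (v+εb)(G+εA)] = ∫∫ [b(v+G) + aV]`;
(ii) `âd*_{(v+G,V)}(g,v)` is exactly the right-hand side of the generalized KP system
`g_t = v·g_x − v_x·g − g_y·g + g_x·∂_x^{−1}g_y + c₂·v_y + c₂·∂_x^{−1}g_{yy}`,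
`v_t = 3·v_x·v + c₁·v_{xxx} + c₂·∂_x^{−1}v_{yy} + 2·v·g_y − v_y·g + v_x·∂_x^{−1}g_y
− 2·g_x·∂_x^{−1}v_y + c₁·g_{xxy}`. -/
theorem generalized_KP_euler_equation (c₁ c₂ : ℂ) (g v G V : F2)
    (hg : SmoothPer2 g) (hv : SmoothPer2 v) (hG : SmoothPer2 G) (hV : SmoothPer2 V)
    (hGx : ∀ p, pdx G p = pdy g p) (hVx : ∀ p, pdx V p = pdy v p)
    (hG0 : ∀ y : ℝ, (∫ x in (0:ℝ)..(2 * π), G (x, y)) = 0)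
    (hV0 : ∀ y : ℝ, (∫ x in (0:ℝ)..(2 * π), V (x, y)) = 0) :
    (∀ a b A : F2, SmoothPer2 a → SmoothPer2 b → SmoothPer2 A →
      (∀ p, pdx A p = pdy a p) → (∀ y : ℝ, (∫ x in (0:ℝ)..(2 * π), A (x, y)) = 0) →
      deriv (fun ε : ℝ => integ2 (fun p =>
          (v p + (ε : ℂ) * b p) ^ 2 / 2 + (v p + (ε : ℂ) * b p) * (G p + (ε : ℂ) * A p))) 0
        = integ2 (fun p => b p * (v p + G p) + a p * V p)) ∧
    hatAd c₁ c₂ (fun p => v p + G p) V g v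
      = (fun p => v p * pdx g p - pdx v p * g p - pdy g p * g p + pdx g p * G p
            + c₂ * pdy v p + c₂ * pdy G p,
         fun p => 3 * pdx v p * v p + c₁ * pdx (pdx (pdx v)) p + c₂ * pdy V p
            + 2 * v p * pdy g p - pdy v p * g p + pdx v p * G p - 2 * pdx g p * V p
            + c₁ * pdx (pdx (pdy g)) p) := by
  constructor
  · intro a b A ha hb hA hAx hA0
    have cv := hv.1.continuous
    have cG := hG.1.continuous
    have cV := hV.1.continuous
    have cb := hb.1.continuous
    have ca := ha.1.continuous
    have cA := hA.1.continuous
    have cf0 : Continuous (fun p : ℝ × ℝ => v p ^ 2 / 2 + v p * G p) :=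
      ((cv.pow 2).div_const 2).add (cv.mul cG)
    have cf1a : Continuous (fun p : ℝ × ℝ => b p * (v p + G p)) := cb.mul (cv.add cG)
    have cf1b : Continuous (fun p : ℝ × ℝ => v p * A p) := cv.mul cA
    have cf1 : Continuous (fun p : ℝ × ℝ => b p * (v p + G p) + v p * A p) := cf1a.add cf1b
    have cf2 : Continuous (fun p : ℝ × ℝ => b p ^ 2 / 2 + b p * A p) :=
      ((cb.pow 2).div_const 2).add (cb.mul cA)
    have key : (fun ε : ℝ => integ2 (fun p =>
        (v p + (ε : ℂ) * b p) ^ 2 / 2 + (v p + (ε : ℂ) * b p) * (G p + (ε : ℂ) * A p)))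
        = fun ε : ℝ => integ2 (fun p => v p ^ 2 / 2 + v p * G p)
            + (ε : ℂ) * integ2 (fun p => b p * (v p + G p) + v p * A p)
            + (ε : ℂ) ^ 2 * integ2 (fun p => b p ^ 2 / 2 + b p * A p) := by
      funext ε
      calc integ2 (fun p =>
              (v p + (ε : ℂ) * b p) ^ 2 / 2 + (v p + (ε : ℂ) * b p) * (G p + (ε : ℂ) * A p))
          = integ2 (fun p => (v p ^ 2 / 2 + v p * G p)
              + ((ε : ℂ) * (b p * (v p + G p) + v p * A p)
                + (ε : ℂ) ^ 2 * (b p ^ 2 / 2 + b p * A p))) := integ2_congr fun p => by ring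
        _ = integ2 (fun p => v p ^ 2 / 2 + v p * G p)
            + integ2 (fun p => (ε : ℂ) * (b p * (v p + G p) + v p * A p)
                + (ε : ℂ) ^ 2 * (b p ^ 2 / 2 + b p * A p)) :=
            integ2_add cf0 ((continuous_const.mul cf1).add (continuous_const.mul cf2))
        _ = integ2 (fun p => v p ^ 2 / 2 + v p * G p)
            + (integ2 (fun p => (ε : ℂ) * (b p * (v p + G p) + v p * A p))
                + integ2 (fun p => (ε : ℂ) ^ 2 * (b p ^ 2 / 2 + b p * A p))) := by
            rw [integ2_add (f := fun p => (ε : ℂ) * (b p * (v p + G p) + v p * A p))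
                (g := fun p => (ε : ℂ) ^ 2 * (b p ^ 2 / 2 + b p * A p))
                (continuous_const.mul cf1) (continuous_const.mul cf2)]
        _ = integ2 (fun p => v p ^ 2 / 2 + v p * G p)
            + (ε : ℂ) * integ2 (fun p => b p * (v p + G p) + v p * A p)
            + (ε : ℂ) ^ 2 * integ2 (fun p => b p ^ 2 / 2 + b p * A p) := by
            rw [integ2_const_mul ((ε : ℂ)) (fun p => b p * (v p + G p) + v p * A p),
              integ2_const_mul ((ε : ℂ) ^ 2) (fun p => b p ^ 2 / 2 + b p * A p)]
            ring
    rw [key]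
    have h0 : HasDerivAt (fun ε : ℝ => (ε : ℂ)) 1 0 := (hasDerivAt_id (0:ℝ)).ofReal_comp
    have h1 := h0.mul_const (integ2 (fun p => b p * (v p + G p) + v p * A p))
    have h2 := (h0.mul h0).mul_const (integ2 (fun p => b p ^ 2 / 2 + b p * A p))
    have h3 := ((hasDerivAt_const (0:ℝ)
      (integ2 (fun p => v p ^ 2 / 2 + v p * G p))).add h1).add h2
    have h4' : HasDerivAt (fun ε : ℝ => integ2 (fun p => v p ^ 2 / 2 + v p * G p)
            + (ε : ℂ) * integ2 (fun p => b p * (v p + G p) + v p * A p)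
            + (ε : ℂ) * (ε : ℂ) * integ2 (fun p => b p ^ 2 / 2 + b p * A p))
        (integ2 (fun p => b p * (v p + G p) + v p * A p)) 0 := by
      exact h3.congr_deriv (by push_cast; ring)
    have h4 : HasDerivAt (fun ε : ℝ => integ2 (fun p => v p ^ 2 / 2 + v p * G p)
            + (ε : ℂ) * integ2 (fun p => b p * (v p + G p) + v p * A p)
            + (ε : ℂ) ^ 2 * integ2 (fun p => b p ^ 2 / 2 + b p * A p))
        (integ2 (fun p => b p * (v p + G p) + v p * A p)) 0 := by
      have hfg : (fun ε : ℝ => integ2 (fun p => v p ^ 2 / 2 + v p * G p)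
            + (ε : ℂ) * integ2 (fun p => b p * (v p + G p) + v p * A p)
            + (ε : ℂ) ^ 2 * integ2 (fun p => b p ^ 2 / 2 + b p * A p))
          = (fun ε : ℝ => integ2 (fun p => v p ^ 2 / 2 + v p * G p)
            + (ε : ℂ) * integ2 (fun p => b p * (v p + G p) + v p * A p)
            + (ε : ℂ) * (ε : ℂ) * integ2 (fun p => b p ^ 2 / 2 + b p * A p)) :=
        funext fun ε => by ring
      rw [hfg]
      exact h4'
    rw [h4.deriv]
    rw [integ2_add cf1a cf1b, pairing hv hV hVx hV0 ha hA hAx hA0,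
      ← integ2_add (g := fun p => a p * V p) cf1a (ca.mul cV)]
  · have e1 : pdx (fun q => v q + G q) = fun q => pdx v q + pdx G q :=
      funext (pdx_add hv.1 hG.1)
    have e4 : pdx G = pdy g := funext hGx
    have eB : pdx (fun q => pdx v q + pdy g q) = fun q => pdx (pdx v) q + pdx (pdy g) q :=
      funext (pdx_add (contDiff_pdx hv.1) (contDiff_pdy hg.1))
    have eC : pdx (fun q => pdx (pdx v) q + pdx (pdy g) q)
        = fun q => pdx (pdx (pdx v)) q + pdx (pdx (pdy g)) q :=
      funext (pdx_add (contDiff_pdx (contDiff_pdx hv.1)) (contDiff_pdx (contDiff_pdy hg.1)))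
    have e5 : pdy (fun q => v q + G q) = fun q => pdy v q + pdy G q :=
      funext (pdy_add hv.1 hG.1)
    have e6 : pdx V = pdy v := funext hVx
    unfold hatAd
    refine Prod.ext ?_ ?_
    · funext p
      simp only [e1, e5, e4]
      ring
    · funext p
      simp only [e1, e4, eB, eC, e5, e6]
      ring
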